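/- Let T and S be densely defined linear operators in a complex Hilbert space H. If S is closed and the range R(S) has finite codimension in H, then TS is densely defined and (TS)* = S*T*. -/

import Mathlib

open LinearPMap

local notation "⟪" x ", " y "⟫" => @inner ℂ _ _ x y

/-- The sum of a closed submodule and a finite-dimensional submodule is closed. -/
lemma isClosed_sup_findim {E : Type*} [NormedAddCommGroup E] [NormedSpace ℂ E]
    (Q V : Submodule ℂ E) (hQ : IsClosed (Q : Set E)) [FiniteDimensional ℂ V] :
    IsClosed ((Q ⊔ V : Submodule ℂ E) : Set E) := by
  haveI : IsClosed (Q : Set E) := hQ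
  haveI : FiniteDimensional ℂ (V.map Q.mkQ) := Module.Finite.map V Q.mkQ
  have h1 : IsClosed ((V.map Q.mkQ : Submodule ℂ (E ⧸ Q)) : Set (E ⧸ Q)) :=
    Submodule.closed_of_finiteDimensional _
  have h2 : ((Q ⊔ V : Submodule ℂ E) : Set E) = Q.mkQ ⁻¹' (V.map Q.mkQ) := by
    rw [← Submodule.comap_map_mkQ Q V]; rfl
  rw [h2]
  exact h1.preimage continuous_quot_mk

/-- The range of a continuous linear map between Banach spaces with finite-codimensional
range is closed. -/
lemma isClosed_range_of_finite_codim {E F : Type*}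
    [NormedAddCommGroup E] [NormedSpace ℂ E] [CompleteSpace E]
    [NormedAddCommGroup F] [NormedSpace ℂ F] [CompleteSpace F]
    (f : E →L[ℂ] F) (h : FiniteDimensional ℂ (F ⧸ LinearMap.range (f : E →ₗ[ℂ] F))) :
    IsClosed ((LinearMap.range (f : E →ₗ[ℂ] F) : Submodule ℂ F) : Set F) := by
  set Q : Submodule ℂ F := LinearMap.range (f : E →ₗ[ℂ] F) with hQdef
  obtain ⟨W, hW⟩ := Q.exists_isCompl
  haveI : FiniteDimensional ℂ (F ⧸ Q) := h
  haveI : FiniteDimensional ℂ W := (Submodule.quotientEquivOfIsCompl Q W hW).finiteDimensional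
  haveI : CompleteSpace W := FiniteDimensional.complete ℂ W
  set g : E × W →L[ℂ] F := f.coprod W.subtypeL with hgdef
  have hgsurj : Function.Surjective g := by
    intro y
    obtain ⟨q, hq, w, hw, hqw⟩ := Submodule.mem_sup.mp
      (by rw [hW.sup_eq_top]; trivial : y ∈ Q ⊔ W)
    obtain ⟨x, hx⟩ := hq
    exact ⟨(x, ⟨w, hw⟩), by simp [hgdef, ← hqw, ← hx]⟩
  obtain ⟨C, hC0, hC⟩ := g.exists_preimage_norm_le hgsurj
  refine isClosed_of_closure_subset ?_
  intro y hy
  obtain ⟨u, hu, hulim⟩ := mem_closure_iff_seq_limit.mp hy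
  have key : ∀ n : ℕ, ∃ x : E, ∃ w : W, f x + (w : F) = y - u n ∧ ‖w‖ ≤ C * ‖y - u n‖ := by
    intro n
    obtain ⟨⟨x, w⟩, hxw, hnorm⟩ := hC (y - u n)
    exact ⟨x, w, hxw, le_trans (norm_snd_le (x, w)) hnorm⟩
  choose x w hxw hwnorm using key
  have hwconst : ∀ n, w n = W.projectionOnto Q hW.symm y := by
    intro n
    have h1 : y = (f (x n) + u n) + (w n : F) := by
      have := hxw n; rw [eq_sub_iff_add_eq] at this
      rw [← this]; abel
    have h2 : f (x n) + u n ∈ Q := by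
      refine Q.add_mem (LinearMap.mem_range_self _ _) ?_
      exact hu n
    rw [h1]
    rw [_root_.map_add, Submodule.projectionOnto_apply_right hW.symm ⟨_, h2⟩,
      Submodule.projectionOnto_apply_left hW.symm (w n)]
    simp
  have hwzero : W.projectionOnto Q hW.symm y = 0 := by
    have hlim : Filter.Tendsto (fun n => ‖(w n : F)‖) Filter.atTop (nhds 0) := by
      refine squeeze_zero (fun n => norm_nonneg _) (fun n => hwnorm n) ?_
      have h3 : Filter.Tendsto (fun n => y - u n) Filter.atTop (nhds 0) := by
        simpa using ((tendsto_const_nhds :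
          Filter.Tendsto (fun _ : ℕ => y) Filter.atTop (nhds y)).sub hulim)
      simpa using (h3.norm.const_mul C)
    have hconst : (fun n => ‖(w n : F)‖) =
        fun _ => ‖((W.projectionOnto Q hW.symm y : W) : F)‖ := by
      funext n; rw [hwconst n]
    rw [hconst] at hlim
    have h4 := tendsto_nhds_unique hlim tendsto_const_nhds
    have h5 : ‖((W.projectionOnto Q hW.symm y : W) : F)‖ = 0 := h4.symm ▸ rfl
    ext1
    simpa using norm_eq_zero.mp h5
  have h6 := hwconst 0
  rw [hwzero] at h6
  have h0 : (w 0 : F) = 0 := by rw [h6]; rfl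
  have h7 := hxw 0
  rw [h0, add_zero, eq_sub_iff_add_eq] at h7
  rw [← h7]
  exact Q.add_mem (LinearMap.mem_range_self _ _) (hu 0)

/-- Choice of a finite family of elements of `M` spanning `M` modulo `Q`. -/
lemma exists_spanning_family {E : Type*} [NormedAddCommGroup E] [NormedSpace ℂ E]
    (M Q : Submodule ℂ E) [FiniteDimensional ℂ (E ⧸ Q)] :
    ∃ (k : ℕ) (u : Fin k → E), (∀ i, u i ∈ M) ∧
      LinearIndependent ℂ (fun i => Q.mkQ (u i)) ∧
      ∀ m ∈ M, ∃ c : Fin k → ℂ, m - ∑ i, c i • u i ∈ M ⊓ Q := by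
  set N : Submodule ℂ (E ⧸ Q) := M.map Q.mkQ with hNdef
  set b := Module.finBasis ℂ N with hbdef
  have hbmem : ∀ i, ((b i : E ⧸ Q)) ∈ N := fun i => (b i).2
  have hpre : ∀ i, ∃ m ∈ M, Q.mkQ m = (b i : E ⧸ Q) := by
    intro i
    obtain ⟨m, hm, hmq⟩ := Submodule.mem_map.mp (hbmem i)
    exact ⟨m, hm, hmq⟩
  choose u huM huq using hpre
  have hfun : (fun i => Q.mkQ (u i)) = (N.subtype ∘ fun i => b i) := funext fun i => by
    simp [huq i]
  refine ⟨_, u, huM, ?_, ?_⟩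
  · rw [hfun]
    exact b.linearIndependent.map' N.subtype (Submodule.ker_subtype N)
  · intro m hm
    have h1 : Q.mkQ m ∈ Submodule.span ℂ (Set.range fun i => Q.mkQ (u i)) := by
      have h2 : Q.mkQ m ∈ N := Submodule.mem_map_of_mem hm
      have h3 : Submodule.span ℂ (Set.range fun i => Q.mkQ (u i)) =
          Submodule.map N.subtype (Submodule.span ℂ (Set.range b)) := by
        rw [Submodule.map_span, ← Set.range_comp, ← hfun]
      rw [h3, b.span_eq, Submodule.map_top, Submodule.range_subtype]
      exact h2
    obtain ⟨c, hc⟩ := (Submodule.mem_span_range_iff_exists_fun ℂ).mp h1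
    refine ⟨c, Submodule.mem_inf.mpr ⟨?_, ?_⟩⟩
    · exact M.sub_mem hm (M.sum_mem fun i _ => M.smul_mem _ (huM i))
    · rw [← Submodule.Quotient.mk_eq_zero]
      have h4 : Q.mkQ (m - ∑ i, c i • u i) = Q.mkQ m - ∑ i, c i • Q.mkQ (u i) := by
        simp [_root_.map_sub, _root_.map_sum, _root_.map_smul]
      rw [show Submodule.Quotient.mk (m - ∑ i, c i • u i) = Q.mkQ (m - ∑ i, c i • u i) from rfl,
        h4, hc, sub_self]

/-- If `M` is dense and `Q` is closed with a finite family of elements of `M` spanning `M`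
modulo `Q`, then `M ⊓ Q` is dense in `Q`. -/
lemma subset_closure_inf {E : Type*} [NormedAddCommGroup E] [NormedSpace ℂ E]
    {M Q : Submodule ℂ E} (hM : Dense (M : Set E)) (hQ : IsClosed (Q : Set E))
    {k : ℕ} {u : Fin k → E}
    (hspan : ∀ m ∈ M, ∃ c : Fin k → ℂ, m - ∑ i, c i • u i ∈ M ⊓ Q) :
    (Q : Set E) ⊆ closure ((M ⊓ Q : Submodule ℂ E) : Set E) := by
  set C : Submodule ℂ E := (M ⊓ Q).topologicalClosure with hCdef
  have hCclosed : IsClosed (C : Set E) := Submodule.isClosed_topologicalClosure _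
  haveI : IsClosed (C : Set E) := hCclosed
  have hCQ : C ≤ Q := Submodule.topologicalClosure_minimal _ inf_le_right hQ
  set V : Submodule ℂ E := Submodule.span ℂ (Set.range u) with hVdef
  haveI : FiniteDimensional ℂ V := FiniteDimensional.span_of_finite ℂ (Set.finite_range u)
  have hMle : M ≤ C ⊔ V := by
    intro m hm
    obtain ⟨c, hc⟩ := hspan m hm
    have h1 : m - ∑ i, c i • u i ∈ C :=
      Submodule.le_topologicalClosure _ hc
    have h2 : (∑ i, c i • u i) ∈ V :=
      V.sum_mem fun i _ => V.smul_mem _ (Submodule.subset_span (Set.mem_range_self i))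
    have h3 : m = (m - ∑ i, c i • u i) + ∑ i, c i • u i := by abel
    rw [h3]
    exact Submodule.add_mem _ (Submodule.mem_sup_left h1) (Submodule.mem_sup_right h2)
  have hsup : C ⊔ V = ⊤ := by
    have hclosed := isClosed_sup_findim C V hCclosed
    have hdense : Dense ((C ⊔ V : Submodule ℂ E) : Set E) := hM.mono hMle
    rw [Submodule.eq_top_iff']
    intro x
    have h5 : ((C ⊔ V : Submodule ℂ E) : Set E) = Set.univ := by
      rw [← hclosed.closure_eq, hdense.closure_eq]
    exact (Set.eq_univ_iff_forall.mp h5) x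
  haveI : FiniteDimensional ℂ (E ⧸ C) := by
    refine Module.Finite.of_surjective (C.mkQ.comp V.subtype) ?_
    intro x
    obtain ⟨e, rfl⟩ := Submodule.mkQ_surjective C x
    obtain ⟨cc, hcc, v, hv, rfl⟩ := Submodule.mem_sup.mp
      (by rw [hsup]; trivial : e ∈ C ⊔ V)
    refine ⟨⟨v, hv⟩, ?_⟩
    simp only [LinearMap.comp_apply, Submodule.subtype_apply, Submodule.mkQ_apply]
    rw [Submodule.Quotient.eq]
    simpa using hcc
  have hX : M.map C.mkQ = ⊤ := by
    set X := M.map C.mkQ with hXdef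
    have hXdense : Dense (X : Set (E ⧸ C)) := by
      rw [dense_iff_closure_eq]
      apply Set.eq_univ_of_univ_subset
      calc Set.univ = C.mkQ '' closure (M : Set E) := by
                  rw [hM.closure_eq, Set.image_univ, Set.range_eq_univ.mpr
                    (Submodule.mkQ_surjective C)]
        _ ⊆ closure (C.mkQ '' (M : Set E)) :=
                  image_closure_subset_closure_image continuous_quot_mk
        _ = closure (X : Set (E ⧸ C)) := by rw [Submodule.map_coe]
    have hXclosed : IsClosed (X : Set (E ⧸ C)) := Submodule.closed_of_finiteDimensional _
    rw [Submodule.eq_top_iff']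
    intro x
    have h6 : (X : Set (E ⧸ C)) = Set.univ := by rw [← hXclosed.closure_eq, hXdense.closure_eq]
    exact (Set.eq_univ_iff_forall.mp h6) x
  intro r hr
  have h7 : C.mkQ r ∈ M.map C.mkQ := by rw [hX]; trivial
  obtain ⟨m, hm, hmr⟩ := Submodule.mem_map.mp h7
  have hrm : r - m ∈ C := by
    rw [← Submodule.Quotient.eq]
    exact hmr.symm
  have hmQ : m ∈ Q := by
    have h8 : m = r - (r - m) := by abel
    rw [h8]
    exact Q.sub_mem hr (hCQ hrm)
  have hmC : m ∈ C := Submodule.le_topologicalClosure _ (Submodule.mem_inf.mpr ⟨hm, hmQ⟩)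
  have h9 : r = (r - m) + m := by abel
  have hrC : r ∈ C := by rw [h9]; exact C.add_mem hrm hmC
  rw [← Submodule.topologicalClosure_coe]
  exact hrC

variable {H : Type*} [NormedAddCommGroup H] [InnerProductSpace ℂ H] [CompleteSpace H]

/-- The graph of the unbounded-operator product `A ∘ B`,
i.e. the linear relation `{(x, z) : ∃ y, (x, y) ∈ graph B ∧ (y, z) ∈ graph A}`. -/
noncomputable def LinearPMap.productGraph (A B : H →ₗ.[ℂ] H) : Submodule ℂ (H × H) where
  carrier := {p : H × H | ∃ y : H, (p.1, y) ∈ B.graph ∧ (y, p.2) ∈ A.graph}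
  add_mem' := by
    rintro p q ⟨y, hy1, hy2⟩ ⟨z, hz1, hz2⟩
    exact ⟨y + z, add_mem hy1 hz1, add_mem hy2 hz2⟩
  zero_mem' := ⟨0, zero_mem _, zero_mem _⟩
  smul_mem' := by
    rintro c p ⟨y, hy1, hy2⟩
    exact ⟨c • y, Submodule.smul_mem _ c hy1, Submodule.smul_mem _ c hy2⟩

/-- The product (composition) `A ∘ B` of two unbounded operators: its domain is
`{x ∈ D(B) : B x ∈ D(A)}` and it sends `x` to `A (B x)`. -/
noncomputable def LinearPMap.product (A B : H →ₗ.[ℂ] H) : H →ₗ.[ℂ] H :=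
  (A.productGraph B).toLinearPMap

/-- An unbounded operator is normal if it is densely defined, closed and `T*T = TT*`
(equality of unbounded operators, including equality of domains). -/
def LinearPMap.IsNormalOp (T : H →ₗ.[ℂ] H) : Prop :=
  Dense (T.domain : Set H) ∧ T.IsClosed ∧ (T†).product T = T.product (T†)

/-- `B` is relatively bounded with respect to `T` (`B` is `T`-bounded): `D(T) ⊆ D(B)` and
`‖B x‖ ≤ a ‖x‖ + b ‖T x‖` on `D(T)` for some constants `a, b ≥ 0`. -/
def LinearPMap.IsRelativelyBounded (B T : H →ₗ.[ℂ] H) : Prop :=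
  T.domain ≤ B.domain ∧ ∃ a b : ℝ, 0 ≤ a ∧ 0 ≤ b ∧
    ∀ (x : H) (hxT : x ∈ T.domain) (hxB : x ∈ B.domain),
      ‖B ⟨x, hxB⟩‖ ≤ a * ‖x‖ + b * ‖T ⟨x, hxT⟩‖

/-- Bounded solvability for a closed operator with closed range. -/
lemma exists_bounded_preimage (S : H →ₗ.[ℂ] H) (hScl : S.IsClosed)
    (hRclosed : IsClosed ((LinearMap.range S.toFun : Submodule ℂ H) : Set H)) :
    ∃ C > 0, ∀ y ∈ LinearMap.range S.toFun,
      ∃ x : S.domain, S x = y ∧ ‖(x : H)‖ ≤ C * ‖y‖ := by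
  set R : Submodule ℂ H := LinearMap.range S.toFun with hRdef
  haveI : CompleteSpace R := hRclosed.completeSpace_coe
  haveI : CompleteSpace S.graph := (hScl : IsClosed (S.graph : Set (H × H))).completeSpace_coe
  have hmem : ∀ g : S.graph, ((LinearMap.snd ℂ H H).comp S.graph.subtype) g ∈ R := by
    rintro ⟨⟨a, b⟩, hab⟩
    rw [LinearPMap.mem_graph_iff] at hab
    obtain ⟨x, hx1, hx2⟩ := hab
    exact ⟨x, hx2⟩
  set plin : S.graph →ₗ[ℂ] R :=
    LinearMap.codRestrict R ((LinearMap.snd ℂ H H).comp S.graph.subtype) hmem with hplin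
  set p : S.graph →L[ℂ] R := LinearMap.mkContinuous plin 1 (fun g => by
    have h1 : ‖plin g‖ = ‖(g : H × H).2‖ := rfl
    rw [h1, one_mul]
    exact (norm_snd_le (g : H × H)).trans le_rfl) with hp
  have hsurj : Function.Surjective p := by
    rintro ⟨y, hy⟩
    obtain ⟨x, hx⟩ := hy
    refine ⟨⟨(x, S x), S.mem_graph x⟩, ?_⟩
    apply Subtype.ext
    exact hx
  obtain ⟨C, hC0, hC⟩ := p.exists_preimage_norm_le hsurj
  refine ⟨C, hC0, ?_⟩
  intro y hy
  obtain ⟨g, hpg, hnorm⟩ := hC ⟨y, hy⟩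
  have hval : (g : H × H).2 = y := congrArg Subtype.val hpg
  have hgmem := g.2
  rw [show (g : H × H) = ((g : H × H).1, (g : H × H).2) from rfl,
    LinearPMap.mem_graph_iff] at hgmem
  obtain ⟨x, hx1, hx2⟩ := hgmem
  refine ⟨x, by rw [hx2, hval], ?_⟩
  calc ‖(x : H)‖ = ‖(g : H × H).1‖ := by rw [hx1]
    _ ≤ ‖(g : H × H)‖ := norm_fst_le _
    _ = ‖g‖ := rfl
    _ ≤ C * ‖(⟨y, hy⟩ : R)‖ := hnorm
    _ = C * ‖y‖ := rfl

lemma productGraph_prop (A B : H →ₗ.[ℂ] H) :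
    ∀ (x : H × H) (_hx : x ∈ A.productGraph B) (_hx' : x.fst = 0), x.snd = 0 := by
  rintro ⟨x, z⟩ ⟨y, h1, h2⟩ (rfl : x = 0)
  have hy : y = 0 := B.graph_fst_eq_zero_snd h1 rfl
  subst hy
  exact A.graph_fst_eq_zero_snd h2 rfl

lemma product_graph_eq (A B : H →ₗ.[ℂ] H) :
    (A.product B).graph = A.productGraph B :=
  Submodule.toLinearPMap_graph_eq _ (productGraph_prop A B)

lemma mem_product_graph_iff {A B : H →ₗ.[ℂ] H} {x z : H} :
    (x, z) ∈ (A.product B).graph ↔ ∃ y : H, (x, y) ∈ B.graph ∧ (y, z) ∈ A.graph := by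
  rw [product_graph_eq]; rfl

lemma mem_product_domain_iff {A B : H →ₗ.[ℂ] H} {x : H} :
    x ∈ (A.product B).domain ↔ ∃ z : H, (x, z) ∈ (A.product B).graph := by
  rw [← (A.product B).graph_map_fst_eq_domain]
  constructor
  · rintro ⟨⟨a, b⟩, hab, rfl⟩
    exact ⟨b, hab⟩
  · rintro ⟨z, hz⟩
    exact ⟨(x, z), hz, rfl⟩

/-- If `T`, `S` are densely defined, `S` is closed and `R(S)` has finite
codimension in `H`, then `TS` is densely defined and `(TS)* = S*T*`. -/
theorem statement5 (T S : H →ₗ.[ℂ] H)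
    (hT : Dense (T.domain : Set H)) (hS : Dense (S.domain : Set H))
    (hScl : S.IsClosed)
    (hcodim : FiniteDimensional ℂ (H ⧸ LinearMap.range S.toFun)) :
    Dense ((T.product S).domain : Set H) ∧ (T.product S)† = (S†).product (T†) := by
  set R : Submodule ℂ H := LinearMap.range S.toFun with hRdef
  -- `R` is closed
  have hRclosed : IsClosed (R : Set H) := by
    haveI : CompleteSpace S.graph := (hScl : IsClosed (S.graph : Set (H × H))).completeSpace_coe
    set f : S.graph →L[ℂ] H := (ContinuousLinearMap.snd ℂ H H).comp S.graph.subtypeL with hfdef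
    have hrange : LinearMap.range (f : S.graph →ₗ[ℂ] H) = R := by
      ext v
      constructor
      · rintro ⟨⟨⟨a, b⟩, hab⟩, rfl⟩
        rw [LinearPMap.mem_graph_iff] at hab
        obtain ⟨x, hx1, hx2⟩ := hab
        exact ⟨x, hx2⟩
      · rintro ⟨x, hx⟩
        exact ⟨⟨(x, S x), S.mem_graph x⟩, hx⟩
    have hcodim' : FiniteDimensional ℂ (H ⧸ LinearMap.range (f : S.graph →ₗ[ℂ] H)) := by
      rw [hrange]; exact hcodim
    have := isClosed_range_of_finite_codim f hcodim'
    rwa [hrange] at this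
  obtain ⟨C, hC0, hsolve⟩ := exists_bounded_preimage S hScl hRclosed
  haveI : FiniteDimensional ℂ (H ⧸ R) := hcodim
  obtain ⟨k, u, huM, huind, huspan⟩ := exists_spanning_family T.domain R
  have hinter : (R : Set H) ⊆ closure ((T.domain ⊓ R : Submodule ℂ H) : Set H) :=
    subset_closure_inf hT hRclosed huspan
  -- the approximation scheme
  have happrox : ∀ x : S.domain, ∃ (w : ℕ → H) (v : ℕ → S.domain),
      (∀ n, w n ∈ T.domain) ∧ (∀ n, S (v n) = w n - S x) ∧
      Filter.Tendsto (fun n => ((v n : H))) Filter.atTop (nhds 0) ∧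
      Filter.Tendsto w Filter.atTop (nhds (S x)) := by
    intro x
    have hSx : S x ∈ R := ⟨x, rfl⟩
    obtain ⟨w, hwmem, hwlim⟩ := mem_closure_iff_seq_limit.mp (hinter hSx)
    have hwR : ∀ n, w n ∈ R := fun n => (Submodule.mem_inf.mp (hwmem n)).2
    have hwT : ∀ n, w n ∈ T.domain := fun n => (Submodule.mem_inf.mp (hwmem n)).1
    have hdiff : ∀ n, w n - S x ∈ R := fun n => R.sub_mem (hwR n) hSx
    choose v hv hvnorm using fun n => hsolve (w n - S x) (hdiff n)
    refine ⟨w, v, hwT, hv, ?_, hwlim⟩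
    have hdlim : Filter.Tendsto (fun n => ‖w n - S x‖) Filter.atTop (nhds 0) := by
      have h3 : Filter.Tendsto (fun n => w n - S x) Filter.atTop (nhds 0) := by
        simpa using hwlim.sub (tendsto_const_nhds :
          Filter.Tendsto (fun _ : ℕ => S x) Filter.atTop (nhds (S x)))
      simpa using h3.norm
    rw [tendsto_zero_iff_norm_tendsto_zero]
    refine squeeze_zero (fun n => norm_nonneg _) (fun n => hvnorm n) ?_
    simpa using hdlim.const_mul C
  -- membership in the product domain from the scheme
  have hprodmem : ∀ (x : S.domain) (m : H) (hm : m ∈ T.domain), S x = m →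
      ∃ z, ((x : H), z) ∈ (T.product S).graph := by
    intro x m hm hxm
    refine ⟨T ⟨m, hm⟩, mem_product_graph_iff.mpr ⟨m, ?_, ?_⟩⟩
    · have := S.mem_graph x
      rwa [hxm] at this
    · exact T.mem_graph ⟨m, hm⟩
  -- Part 1 : density of the product domain
  have hTSdense : Dense ((T.product S).domain : Set H) := by
    have hsub : (S.domain : Set H) ⊆ closure ((T.product S).domain : Set H) := by
      rintro xv hx
      set x : S.domain := ⟨xv, hx⟩ with hxdef
      obtain ⟨w, v, hwT, hv, hvlim, hwlim⟩ := happrox x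
      have hlim : Filter.Tendsto (fun n => xv + (v n : H)) Filter.atTop (nhds xv) := by
        simpa using ((tendsto_const_nhds :
          Filter.Tendsto (fun _ : ℕ => xv) Filter.atTop (nhds xv)).add hvlim)
      have hev : ∀ n : ℕ, xv + (v n : H) ∈ ((T.product S).domain : Set H) := by
        intro n
        have hxn : S (x + v n) = w n := by
          rw [LinearPMap.map_add, hv n]; abel
        obtain ⟨z, hz⟩ := hprodmem (x + v n) (w n) (hwT n) hxn
        exact mem_product_domain_iff.mpr ⟨z, hz⟩
      exact mem_closure_of_tendsto hlim (Filter.Eventually.of_forall hev)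
    rw [dense_iff_closure_eq]
    apply Set.eq_univ_of_univ_subset
    calc Set.univ = closure (S.domain : Set H) := hS.closure_eq.symm
      _ ⊆ closure (closure ((T.product S).domain : Set H)) := closure_mono hsub
      _ = closure ((T.product S).domain : Set H) := closure_closure
  refine ⟨hTSdense, ?_⟩
  -- complementary subspace and continuous projection
  set V : Submodule ℂ H := Submodule.span ℂ (Set.range u) with hVdef
  haveI : FiniteDimensional ℂ V := FiniteDimensional.span_of_finite ℂ (Set.finite_range u)
  have hVM : V ≤ T.domain := Submodule.span_le.mpr (by rintro _ ⟨i, rfl⟩; exact huM i)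
  have hVclosed : IsClosed (V : Set H) := Submodule.closed_of_finiteDimensional _
  have hcompl : IsCompl R V := by
    constructor
    · rw [Submodule.disjoint_def]
      intro a haR haV
      obtain ⟨c, hc⟩ := (Submodule.mem_span_range_iff_exists_fun ℂ).mp haV
      have h1 : ∑ i, c i • R.mkQ (u i) = 0 := by
        have h1a : ∑ i, c i • R.mkQ (u i) = R.mkQ a := by
          rw [← hc]
          simp [_root_.map_sum, _root_.map_smul]
        rw [h1a, Submodule.mkQ_apply, Submodule.Quotient.mk_eq_zero]
        exact haR
      have h2 := (Fintype.linearIndependent_iff.mp huind) c h1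
      rw [← hc]
      simp [h2]
    · rw [codisjoint_iff]
      have hclosed := isClosed_sup_findim R V hRclosed
      have hMle : T.domain ≤ R ⊔ V := by
        intro m hm
        obtain ⟨c, hc⟩ := huspan m hm
        have h1 : m - ∑ i, c i • u i ∈ R := (Submodule.mem_inf.mp hc).2
        have h2 : (∑ i, c i • u i) ∈ V :=
          V.sum_mem fun i _ => V.smul_mem _ (Submodule.subset_span (Set.mem_range_self i))
        have h3 : m = (m - ∑ i, c i • u i) + ∑ i, c i • u i := by abel
        rw [h3]
        exact Submodule.add_mem _ (Submodule.mem_sup_left h1) (Submodule.mem_sup_right h2)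
      have hdense : Dense ((R ⊔ V : Submodule ℂ H) : Set H) := hT.mono hMle
      rw [Submodule.eq_top_iff']
      intro x
      have h5 : ((R ⊔ V : Submodule ℂ H) : Set H) = Set.univ := by
        rw [← hclosed.closure_eq, hdense.closure_eq]
      exact (Set.eq_univ_iff_forall.mp h5) x
  set piR : H →L[ℂ] R := R.linearProjOfClosedCompl V hcompl hRclosed hVclosed with hpiRdef
  -- the projection computes the decomposition coming from `huspan`
  have hproj : ∀ (m : H), m ∈ T.domain → ∀ (c : Fin k → ℂ),
      m - ∑ i, c i • u i ∈ T.domain ⊓ R → ((piR m : H)) = m - ∑ i, c i • u i := by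
    intro m hm c hc
    have h1 : m - ∑ i, c i • u i ∈ R := (Submodule.mem_inf.mp hc).2
    have h2 : (∑ i, c i • u i) ∈ V :=
      V.sum_mem fun i _ => V.smul_mem _ (Submodule.subset_span (Set.mem_range_self i))
    have h3 : m = ((⟨m - ∑ i, c i • u i, h1⟩ : R) : H) + ((⟨∑ i, c i • u i, h2⟩ : V) : H) := by
      simp
    have h4 : piR m = ⟨m - ∑ i, c i • u i, h1⟩ := by
      show R.projectionOnto V hcompl _ = _
      conv_lhs => rw [h3]
      rw [_root_.map_add, Submodule.projectionOnto_apply_left hcompl,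
        Submodule.projectionOnto_apply_right hcompl, add_zero]
    rw [h4]
  -- formal adjoint identities
  have hTS_adj : ∀ (y : (T.product S)†.domain) (a b : H),
      ((a, b) ∈ (T.product S).graph) → ⟪((T.product S)† y : H), a⟫ = ⟪(y : H), b⟫ := by
    intro y a b hab
    rw [LinearPMap.mem_graph_iff] at hab
    obtain ⟨xx, hx1, hx2⟩ := hab
    dsimp only at hx1 hx2
    rw [← hx1, ← hx2]
    exact adjoint_isFormalAdjoint hTSdense y xx
  -- Forward inclusion: graph of `(TS)†` is contained in graph of `S† ∘ T†`
  have hforward : (T.product S)†.graph ≤ ((S†).product (T†)).graph := by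
    rintro ⟨yv, zv⟩ hyz
    rw [LinearPMap.mem_graph_iff] at hyz
    obtain ⟨ye, hy1, hy2⟩ := hyz
    dsimp only at hy1 hy2
    set z : H := (T.product S)† ye with hzdef
    -- Step 1 : `yv ∈ D(T†)`
    have hyT : (yv : H) ∈ (T†).domain := by
      rw [LinearPMap.mem_adjoint_domain_iff]
      set psi : V →ₗ[ℂ] ℂ :=
        (innerₛₗ ℂ (yv : H)).comp (T.toFun.comp (Submodule.inclusion hVM)) with hpsidef
      set psic : V →L[ℂ] ℂ := LinearMap.toContinuousLinearMap psi with hpsicdef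
      set K : ℝ := ‖z‖ * C * ‖piR‖ + ‖psic‖ * (1 + ‖piR‖) with hKdef
      refine AddMonoidHomClass.continuous_of_bound ((innerₛₗ ℂ (yv : H)).comp T.toFun) K fun v => ?_
      obtain ⟨c, hc⟩ := huspan (v : H) v.2
      set m0 : H := (v : H) - ∑ i, c i • u i with hm0def
      have hm0T : m0 ∈ T.domain := (Submodule.mem_inf.mp hc).1
      have hm0R : m0 ∈ R := (Submodule.mem_inf.mp hc).2
      set f0 : H := ∑ i, c i • u i with hf0def
      have hf0V : f0 ∈ V :=
        V.sum_mem fun i _ => V.smul_mem _ (Submodule.subset_span (Set.mem_range_self i))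
      have hf0T : f0 ∈ T.domain := hVM hf0V
      have hsplit : v = (⟨m0, hm0T⟩ : T.domain) + ⟨f0, hf0T⟩ := by
        apply Subtype.ext
        show (v : H) = m0 + f0
        rw [hm0def, hf0def]; abel
      have hTsplit : T v = T ⟨m0, hm0T⟩ + T ⟨f0, hf0T⟩ := by
        rw [hsplit, LinearPMap.map_add]
      -- bound for the `R`-part
      obtain ⟨x', hx'val, hx'norm⟩ := hsolve m0 hm0R
      have hpair : (((x' : H)), T ⟨m0, hm0T⟩) ∈ (T.product S).graph := by
        refine mem_product_graph_iff.mpr ⟨m0, ?_, T.mem_graph ⟨m0, hm0T⟩⟩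
        have := S.mem_graph x'
        rwa [hx'val] at this
      have hterm1 : ⟪(yv : H), T ⟨m0, hm0T⟩⟫ = ⟪z, (x' : H)⟫ := by
        have h8 := hTS_adj ye _ _ hpair
        rw [hy1] at h8
        exact h8.symm
      have hbound1 : ‖⟪(yv : H), T ⟨m0, hm0T⟩⟫‖ ≤ ‖z‖ * C * ‖piR‖ * ‖(v : H)‖ := by
        rw [hterm1]
        calc ‖⟪z, (x' : H)⟫‖ ≤ ‖z‖ * ‖(x' : H)‖ := norm_inner_le_norm _ _
          _ ≤ ‖z‖ * (C * ‖m0‖) := by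
              apply mul_le_mul_of_nonneg_left hx'norm (norm_nonneg z)
          _ = ‖z‖ * C * ‖m0‖ := by ring
          _ ≤ ‖z‖ * C * (‖piR‖ * ‖(v : H)‖) := by
              apply mul_le_mul_of_nonneg_left _ (by positivity)
              have h6 : ‖m0‖ = ‖(piR (v : H) : H)‖ := by rw [hproj (v : H) v.2 c hc]
              rw [h6]
              exact piR.le_opNorm _
          _ = ‖z‖ * C * ‖piR‖ * ‖(v : H)‖ := by ring
      -- bound for the `V`-part
      have hterm2 : ⟪(yv : H), T ⟨f0, hf0T⟩⟫ = psic ⟨f0, hf0V⟩ := by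
        simp only [hpsicdef, hpsidef, LinearMap.coe_toContinuousLinearMap',
          LinearMap.comp_apply, coe_innerₛₗ_apply]
        rfl
      have hbound2 : ‖⟪(yv : H), T ⟨f0, hf0T⟩⟫‖ ≤ ‖psic‖ * (1 + ‖piR‖) * ‖(v : H)‖ := by
        rw [hterm2]
        calc ‖psic ⟨f0, hf0V⟩‖ ≤ ‖psic‖ * ‖(⟨f0, hf0V⟩ : V)‖ := psic.le_opNorm _
          _ = ‖psic‖ * ‖f0‖ := rfl
          _ ≤ ‖psic‖ * ((1 + ‖piR‖) * ‖(v : H)‖) := by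
              refine mul_le_mul_of_nonneg_left ?_ (ContinuousLinearMap.opNorm_nonneg _)
              have h7 : f0 = (v : H) - (piR (v : H) : H) := by
                rw [hproj (v : H) v.2 c hc, hf0def]; abel
              rw [h7]
              calc ‖(v : H) - (piR (v : H) : H)‖ ≤ ‖(v : H)‖ + ‖(piR (v : H) : H)‖ :=
                    norm_sub_le _ _
                _ ≤ ‖(v : H)‖ + ‖piR‖ * ‖(v : H)‖ := by
                    exact add_le_add le_rfl (piR.le_opNorm _)
                _ = (1 + ‖piR‖) * ‖(v : H)‖ := by ring
          _ = ‖psic‖ * (1 + ‖piR‖) * ‖(v : H)‖ := by ring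
      calc ‖((innerₛₗ ℂ (yv : H)).comp T.toFun) v‖ = ‖⟪(yv : H), T v⟫‖ := rfl
        _ = ‖⟪(yv : H), T ⟨m0, hm0T⟩⟫ + ⟪(yv : H), T ⟨f0, hf0T⟩⟫‖ := by
            rw [hTsplit, inner_add_right]
        _ ≤ ‖⟪(yv : H), T ⟨m0, hm0T⟩⟫‖ + ‖⟪(yv : H), T ⟨f0, hf0T⟩⟫‖ := norm_add_le _ _
        _ ≤ ‖z‖ * C * ‖piR‖ * ‖(v : H)‖ + ‖psic‖ * (1 + ‖piR‖) * ‖(v : H)‖ :=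
            add_le_add hbound1 hbound2
        _ = K * ‖(v : H)‖ := by rw [hKdef]; ring
        _ = K * ‖v‖ := rfl
    -- Step 2 : `T† y` and identification of `S† (T† y)` with `z`
    set u' : H := T† ⟨yv, hyT⟩ with hu'def
    have hu' : ∀ w : T.domain, ⟪u', (w : H)⟫ = ⟪yv, T w⟫ := fun w =>
      adjoint_isFormalAdjoint hT ⟨yv, hyT⟩ w
    have hzs : ∀ x : S.domain, ⟪z, (x : H)⟫ = ⟪u', S x⟫ := by
      intro x
      obtain ⟨w, v, hwT, hv, hvlim, hwlim⟩ := happrox x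
      have heq : ∀ n, ⟪z, (x : H) + (v n : H)⟫ = ⟪u', w n⟫ := by
        intro n
        have hxn : S (x + v n) = w n := by
          rw [LinearPMap.map_add, hv n]; abel
        have hpair : (((x : H) + (v n : H)), T ⟨w n, hwT n⟩) ∈ (T.product S).graph := by
          refine mem_product_graph_iff.mpr ⟨w n, ?_, T.mem_graph ⟨w n, hwT n⟩⟩
          have := S.mem_graph (x + v n)
          rwa [hxn] at this
        have h8 : ⟪z, (x : H) + (v n : H)⟫ = ⟪yv, T ⟨w n, hwT n⟩⟫ := by
          have h9 := hTS_adj ye _ _ hpair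
          rw [hy1] at h9
          exact h9
        rw [h8, ← hu' ⟨w n, hwT n⟩]
      have hlim1 : Filter.Tendsto (fun n => ⟪z, (x : H) + (v n : H)⟫) Filter.atTop
          (nhds ⟪z, (x : H)⟫) := by
        have : Filter.Tendsto (fun n => (x : H) + (v n : H)) Filter.atTop (nhds ((x : H))) := by
          simpa using ((tendsto_const_nhds :
            Filter.Tendsto (fun _ : ℕ => (x : H)) Filter.atTop (nhds (x : H))).add hvlim)
        exact (tendsto_const_nhds.inner this)
      have hlim2 : Filter.Tendsto (fun n => ⟪u', w n⟫) Filter.atTop (nhds ⟪u', S x⟫) :=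
        tendsto_const_nhds.inner hwlim
      have heqfun : (fun n => ⟪z, (x : H) + (v n : H)⟫) = fun n => ⟪u', w n⟫ :=
        funext heq
      rw [heqfun] at hlim1
      exact tendsto_nhds_unique hlim1 hlim2
    have hu'S : u' ∈ (S†).domain :=
      mem_adjoint_domain_of_exists u' ⟨z, fun x => hzs x⟩
    have hSu' : S† ⟨u', hu'S⟩ = z :=
      adjoint_apply_eq hS ⟨u', hu'S⟩ fun x => hzs x
    -- conclude
    rw [product_graph_eq]
    refine ⟨u', ?_, ?_⟩
    · have := (T†).mem_graph ⟨yv, hyT⟩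
      exact this
    · have := (S†).mem_graph ⟨u', hu'S⟩
      rw [hSu'] at this
      rw [show zv = z from hy2.symm]
      exact this
  -- Backward inclusion
  have hbackward : ((S†).product (T†)).graph ≤ (T.product S)†.graph := by
    rintro ⟨yv, wv⟩ hyw
    rw [product_graph_eq] at hyw
    obtain ⟨u', hyu', hu'w⟩ := hyw
    rw [LinearPMap.mem_graph_iff] at hyu' hu'w
    obtain ⟨ye, hye1, hye2⟩ := hyu'
    obtain ⟨u'e, hue1, hue2⟩ := hu'w
    dsimp only at hye1 hye2 hue1 hue2
    have hstep : ∀ x : (T.product S).domain, ⟪wv, (x : H)⟫ = ⟪yv, (T.product S) x⟫ := by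
      intro x
      have hpair := (T.product S).mem_graph x
      rw [product_graph_eq] at hpair
      obtain ⟨mid, hx1, hx2⟩ := hpair
      rw [LinearPMap.mem_graph_iff] at hx1 hx2
      obtain ⟨xs, hxs1, hxs2⟩ := hx1
      obtain ⟨mt, hmt1, hmt2⟩ := hx2
      dsimp only at hxs1 hxs2 hmt1 hmt2
      calc ⟪wv, (x : H)⟫ = ⟪(S†) u'e, (xs : H)⟫ := by rw [hue2, hxs1]
        _ = ⟪(u'e : H), S xs⟫ := adjoint_isFormalAdjoint hS u'e xs
        _ = ⟪(T†) ye, (mt : H)⟫ := by rw [hue1, hye2, hxs2, hmt1]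
        _ = ⟪(ye : H), T mt⟫ := adjoint_isFormalAdjoint hT ye mt
        _ = ⟪yv, (T.product S) x⟫ := by rw [hye1, hmt2]
    have hydom : yv ∈ (T.product S)†.domain :=
      mem_adjoint_domain_of_exists yv ⟨wv, fun x => hstep x⟩
    have hyval : (T.product S)† ⟨yv, hydom⟩ = wv :=
      adjoint_apply_eq hTSdense ⟨yv, hydom⟩ fun x => hstep x
    have := (T.product S)†.mem_graph ⟨yv, hydom⟩
    rw [hyval] at this
    exact this
  exact eq_of_eq_graph (le_antisymm hforward hbackward)
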